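/- Assume each μ_j is nonatomic. Then the maxmin value equals the minimum of g over the simplex: sup over all m-partitions (A_1,…,A_m) of C of min_{j=1..m} μ_j(A_j) = inf_{α ∈ Δ_{m−1}} g(α), where g(α) := ∫_C max_{j=1..m} α_j f_j(x) dν(x). -/

import Mathlib

open MeasureTheory Filter Topology Set
open scoped ENNReal NNReal

section Split
variable {C : Type} [MeasurableSpace C] {ν : Measure C}

/-- Splitting property of `ν` relative to subsets of `T`. -/
def MySplit (ν : Measure C) (T : Set C) : Prop :=
  ∀ A : Set C, MeasurableSet A → A ⊆ T → 0 < ν A →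
    ∃ B, MeasurableSet B ∧ B ⊆ A ∧ 0 < ν B ∧ 0 < ν (A \ B)

lemma MySplit.half [IsFiniteMeasure ν] {T A : Set C} (h : MySplit ν T) (hA : MeasurableSet A)
    (hAT : A ⊆ T) (hpos : 0 < ν A) :
    ∃ B, MeasurableSet B ∧ B ⊆ A ∧ 0 < ν B ∧ ν B ≤ ν A * 2⁻¹ := by
  obtain ⟨B, hBm, hBA, hB, hB'⟩ := h A hA hAT hpos
  have hadd : ν (A \ B) + ν B = ν A := by
    rw [← measure_diff_add_inter A hBm, inter_eq_self_of_subset_right hBA]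
  have h2 : ∀ x : ℝ≥0∞, x ≤ ν A * 2⁻¹ ↔ x * 2 ≤ ν A := by
    intro x
    rw [← ENNReal.le_div_iff_mul_le (Or.inl two_ne_zero) (Or.inl ENNReal.ofNat_ne_top),
      ENNReal.div_eq_inv_mul, mul_comm]
  rcases le_total (ν B) (ν (A \ B)) with hle | hle
  · refine ⟨B, hBm, hBA, hB, (h2 _).2 ?_⟩
    rw [mul_two]
    calc ν B + ν B ≤ ν (A \ B) + ν B := by gcongr
    _ = ν A := hadd
  · refine ⟨A \ B, hA.diff hBm, diff_subset, hB', (h2 _).2 ?_⟩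
    rw [mul_two]
    calc ν (A \ B) + ν (A \ B) ≤ ν (A \ B) + ν B := by gcongr
    _ = ν A := hadd

lemma MySplit.small [IsFiniteMeasure ν] {T A : Set C} (h : MySplit ν T) (hA : MeasurableSet A)
    (hAT : A ⊆ T) (hpos : 0 < ν A) {ε : ℝ≥0∞} (hε : 0 < ε) :
    ∃ B, MeasurableSet B ∧ B ⊆ A ∧ 0 < ν B ∧ ν B ≤ ε := by
  have key : ∀ n : ℕ, ∃ B, MeasurableSet B ∧ B ⊆ A ∧ 0 < ν B ∧ ν B ≤ ν A * 2⁻¹ ^ n := by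
    intro n; induction n with
    | zero => exact ⟨A, hA, subset_rfl, hpos, by simp⟩
    | succ n ih =>
      obtain ⟨B, hBm, hBA, hB, hle⟩ := ih
      obtain ⟨B', hB'm, hB'B, hB', hle'⟩ := h.half hBm (hBA.trans hAT) hB
      refine ⟨B', hB'm, hB'B.trans hBA, hB', ?_⟩
      calc ν B' ≤ ν B * 2⁻¹ := hle'
      _ ≤ ν A * 2⁻¹ ^ n * 2⁻¹ := by gcongr
      _ = ν A * 2⁻¹ ^ (n + 1) := by rw [pow_succ, mul_assoc]
  by_cases htop : ε = ⊤
  · obtain ⟨B, h1, h2, h3, _⟩ := key 0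
    exact ⟨B, h1, h2, h3, htop ▸ le_top⟩
  obtain ⟨n, hn⟩ := ENNReal.exists_nat_gt (ENNReal.div_lt_top (measure_ne_top ν A) hε.ne').ne
  obtain ⟨B, h1, h2, h3, h4⟩ := key n
  refine ⟨B, h1, h2, h3, h4.trans ?_⟩
  have hlt : ν A < (2 : ℝ≥0∞) ^ n * ε := by
    have h2n : (n : ℝ≥0∞) ≤ 2 ^ n := by
      have := (Nat.lt_two_pow_self (n := n)).le
      calc (n : ℝ≥0∞) ≤ ((2 ^ n : ℕ) : ℝ≥0∞) := by exact_mod_cast this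
      _ = 2 ^ n := by push_cast; ring
    have := (ENNReal.div_lt_iff (Or.inl hε.ne') (Or.inl htop)).1 hn
    calc ν A < n * ε := this
    _ ≤ 2 ^ n * ε := by gcongr
  calc ν A * 2⁻¹ ^ n ≤ (2 ^ n * ε) * 2⁻¹ ^ n := by gcongr
  _ = ε * (2 ^ n * (2 ^ n)⁻¹) := by rw [ENNReal.inv_pow]; ring
  _ = ε := by rw [ENNReal.mul_inv_cancel (by positivity) (by simp), mul_one]

lemma MySplit.exists_eq [IsFiniteMeasure ν] {T : Set C} (h : MySplit ν T)
    (hT : MeasurableSet T) {t : ℝ≥0∞} (ht : t ≤ ν T) :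
    ∃ B, MeasurableSet B ∧ B ⊆ T ∧ ν B = t := by
  classical
  have htop : t ≠ ⊤ := (ht.trans_lt (measure_lt_top ν T)).ne
  have key : ∀ B : {B : Set C // MeasurableSet B ∧ B ⊆ T ∧ ν B ≤ t},
      ∃ B' : {B : Set C // MeasurableSet B ∧ B ⊆ T ∧ ν B ≤ t}, B.1 ⊆ B'.1 ∧
        ∀ E : Set C, MeasurableSet E → E ⊆ T \ B.1 → ν E ≤ t - ν B.1 →
          ν B.1 + ν E * 2⁻¹ ≤ ν B'.1 := by
    rintro ⟨B, hBm, hBT, hBt⟩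
    set S : Set ℝ≥0∞ := {x | ∃ E : Set C, MeasurableSet E ∧ E ⊆ T \ B ∧ ν E ≤ t - ν B ∧ ν E = x}
      with hS
    have hSle : sSup S ≤ t := sSup_le (by
      rintro x ⟨E, _, _, hEt, rfl⟩
      exact hEt.trans tsub_le_self)
    by_cases hs : sSup S = 0
    · refine ⟨⟨B, hBm, hBT, hBt⟩, subset_rfl, ?_⟩
      intro E hEm hET hEt
      have hE0 : ν E ≤ sSup S := le_sSup ⟨E, hEm, hET, hEt, rfl⟩
      rw [hs] at hE0
      have : ν E = 0 := le_antisymm hE0 zero_le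
      simp [this]
    · have hslt : sSup S * 2⁻¹ < sSup S := by
        have hhalf := ENNReal.half_lt_self hs (hSle.trans_lt (lt_top_iff_ne_top.mpr htop)).ne
        rw [div_eq_mul_inv] at hhalf
        exact hhalf
      obtain ⟨x, hxS, hxgt⟩ := lt_sSup_iff.mp hslt
      obtain ⟨E, hEm, hET, hEt, rfl⟩ := hxS
      have hdisj : Disjoint B E := by
        rw [disjoint_comm]
        exact Disjoint.mono_left (hET.trans (diff_subset_compl T B)) disjoint_compl_left
      have hunion : ν (B ∪ E) = ν B + ν E := measure_union hdisj hEm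
      refine ⟨⟨B ∪ E, hBm.union hEm, union_subset hBT (hET.trans diff_subset), ?_⟩,
        subset_union_left, ?_⟩
      · rw [hunion]
        calc ν B + ν E ≤ ν B + (t - ν B) := by gcongr
        _ = t := add_tsub_cancel_of_le hBt
      · intro E' hE'm hE'T hE't
        have h1 : ν E' ≤ sSup S := le_sSup ⟨E', hE'm, hE'T, hE't, rfl⟩
        simp only [hunion]
        calc ν B + ν E' * 2⁻¹ ≤ ν B + sSup S * 2⁻¹ := by gcongr
        _ ≤ ν B + ν E := add_le_add_right hxgt.le _
  choose step hsub hgain using key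
  let B₀ : {B : Set C // MeasurableSet B ∧ B ⊆ T ∧ ν B ≤ t} :=
    ⟨∅, MeasurableSet.empty, empty_subset _, by simp⟩
  let seq : ℕ → {B : Set C // MeasurableSet B ∧ B ⊆ T ∧ ν B ≤ t} := fun n => step^[n] B₀
  have hseq_succ : ∀ n, seq (n + 1) = step (seq n) := fun n =>
    Function.iterate_succ_apply' step n B₀
  have hmono : Monotone fun n => (seq n).1 := monotone_nat_of_le_succ fun n => by
    rw [hseq_succ]; exact hsub _
  have hνBω : ν (⋃ n, (seq n).1) = ⨆ n, ν (seq n).1 :=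
    hmono.measure_iUnion
  have hBωm : MeasurableSet (⋃ n, (seq n).1) := MeasurableSet.iUnion fun n => (seq n).2.1
  have hBωT : (⋃ n, (seq n).1) ⊆ T := iUnion_subset fun n => (seq n).2.2.1
  have hBωt : ν (⋃ n, (seq n).1) ≤ t := by
    rw [hνBω]; exact iSup_le fun n => (seq n).2.2.2
  refine ⟨⋃ n, (seq n).1, hBωm, hBωT, le_antisymm hBωt ?_⟩
  by_contra hcon
  push_neg at hcon
  have hpos : 0 < ν (T \ ⋃ n, (seq n).1) := by
    have hdd : ν (T \ ⋃ n, (seq n).1) = ν T - ν (⋃ n, (seq n).1) :=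
      measure_diff hBωT hBωm.nullMeasurableSet (measure_ne_top ν _)
    rw [hdd]
    exact tsub_pos_of_lt (hcon.trans_le ht)
  obtain ⟨E, hEm, hET, hE, hEle⟩ := h.small (hT.diff hBωm) diff_subset hpos
    (tsub_pos_of_lt hcon)
  have hgainE : ∀ n, ν (seq n).1 + ν E * 2⁻¹ ≤ ν (seq (n + 1)).1 := by
    intro n
    rw [hseq_succ]
    refine hgain (seq n) E hEm ?_ ?_
    · exact hET.trans (diff_subset_diff_right (subset_iUnion (fun n => (seq n).1) n))
    · refine hEle.trans (tsub_le_tsub_left ?_ t)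
      rw [hνBω]
      exact le_iSup (fun n => ν (seq n).1) n
  have hlin : ∀ n : ℕ, (n : ℝ≥0∞) * (ν E * 2⁻¹) ≤ ν (seq n).1 := by
    intro n; induction n with
    | zero => simp
    | succ n ih =>
      have : ((n : ℕ) + 1 : ℝ≥0∞) * (ν E * 2⁻¹) = n * (ν E * 2⁻¹) + ν E * 2⁻¹ := by
        rw [add_mul, one_mul]
      rw [Nat.cast_add, Nat.cast_one, this]
      calc (n : ℝ≥0∞) * (ν E * 2⁻¹) + ν E * 2⁻¹ ≤ ν (seq n).1 + ν E * 2⁻¹ := by gcongr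
      _ ≤ ν (seq (n + 1)).1 := hgainE n
  have hE2 : ν E * 2⁻¹ ≠ 0 := by
    simp only [ne_eq, mul_eq_zero, not_or]
    exact ⟨hE.ne', by simp⟩
  have hE2top : ν E * 2⁻¹ ≠ ⊤ := by
    exact ENNReal.mul_ne_top (measure_ne_top ν E) (by simp)
  obtain ⟨n, hn⟩ := ENNReal.exists_nat_gt (ENNReal.div_lt_top htop hE2).ne
  have hlt : t < n * (ν E * 2⁻¹) := (ENNReal.div_lt_iff (Or.inl hE2) (Or.inl hE2top)).1 hn
  exact absurd ((hlin n).trans (seq n).2.2.2) (not_le.mpr hlt)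


lemma MySplit.partition [IsFiniteMeasure ν] :
    ∀ (k : ℕ) (T : Set C), MySplit ν T → MeasurableSet T →
      ∀ t : Fin (k + 1) → ℝ≥0∞, (∑ j, t j) = ν T →
      ∃ B : Fin (k + 1) → Set C, (∀ j, MeasurableSet (B j)) ∧
        (∀ i j, i ≠ j → Disjoint (B i) (B j)) ∧ (⋃ j, B j) = T ∧ ∀ j, ν (B j) = t j := by
  intro k
  induction k with
  | zero =>
    intro T h hT t hsum
    refine ⟨fun _ => T, fun _ => hT, ?_, ?_, ?_⟩
    · intro i j hij; exact absurd (by omega : i = j) hij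
    · simp [Set.iUnion_const]
    · intro j
      have hj : j = 0 := by omega
      subst hj
      rw [← hsum, Fin.sum_univ_one]
  | succ k ih =>
    intro T h hT t hsum
    have htop0 : t 0 ≠ ⊤ := by
      refine ne_of_lt (lt_of_le_of_lt ?_ (measure_lt_top ν T))
      rw [← hsum]
      exact Finset.single_le_sum (fun i _ => zero_le) (Finset.mem_univ 0)
    have ht0 : t 0 ≤ ν T := by
      rw [← hsum]
      exact Finset.single_le_sum (fun i _ => zero_le) (Finset.mem_univ 0)
    obtain ⟨B0, hB0m, hB0T, hB0⟩ := h.exists_eq hT ht0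
    have hT' : MeasurableSet (T \ B0) := hT.diff hB0m
    have hsplit' : MySplit ν (T \ B0) := fun A hA hAT hpos =>
      h A hA (hAT.trans diff_subset) hpos
    have hνT' : (∑ j : Fin (k + 1), t j.succ) = ν (T \ B0) := by
      rw [measure_diff hB0T hB0m.nullMeasurableSet (measure_ne_top ν _), hB0]
      conv_rhs => rw [← hsum, Fin.sum_univ_succ]
      rw [ENNReal.add_sub_cancel_left htop0]
    obtain ⟨B', hB'm, hB'd, hB'u, hB'v⟩ := ih (T \ B0) hsplit' hT' (fun j => t j.succ) hνT'
    have hB'sub : ∀ i, B' i ⊆ T \ B0 := fun i => hB'u ▸ subset_iUnion B' i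
    refine ⟨Fin.cases B0 B', ?_, ?_, ?_, ?_⟩
    · intro j
      induction j using Fin.cases with
      | zero => simpa using hB0m
      | succ i => simpa using hB'm i
    · intro i j hij
      induction i using Fin.cases with
      | zero =>
        induction j using Fin.cases with
        | zero => exact absurd rfl hij
        | succ j' =>
          simp only [Fin.cases_zero, Fin.cases_succ]
          exact Disjoint.mono_right (hB'sub j') disjoint_sdiff_self_right
      | succ i' =>
        induction j using Fin.cases with
        | zero =>
          simp only [Fin.cases_zero, Fin.cases_succ]
          exact (Disjoint.mono_right (hB'sub i') disjoint_sdiff_self_right).symm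
        | succ j' =>
          simp only [Fin.cases_succ]
          exact hB'd i' j' (fun hh => hij (by rw [hh]))
    · apply subset_antisymm
      · apply iUnion_subset
        intro j
        induction j using Fin.cases with
        | zero =>
          simpa using hB0T
        | succ i =>
          simpa using ((hB'sub i).trans diff_subset)
      · intro x hx
        by_cases hxB : x ∈ B0
        · exact mem_iUnion.2 ⟨0, by simpa using hxB⟩
        · have : x ∈ T \ B0 := ⟨hx, hxB⟩
          rw [← hB'u] at this
          obtain ⟨i, hi⟩ := mem_iUnion.1 this
          exact mem_iUnion.2 ⟨i.succ, by simpa using hi⟩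
    · intro j
      induction j using Fin.cases with
      | zero => simpa using hB0
      | succ i => simpa using hB'v i

lemma MySplit.partition_real [IsFiniteMeasure ν] {T : Set C} (h : MySplit ν T)
    (hT : MeasurableSet T) {k : ℕ} (θ : Fin (k + 1) → ℝ) (hθ0 : ∀ j, 0 ≤ θ j)
    (hθ1 : ∑ j, θ j = 1) :
    ∃ B : Fin (k + 1) → Set C, (∀ j, MeasurableSet (B j)) ∧
      (∀ i j, i ≠ j → Disjoint (B i) (B j)) ∧ (⋃ j, B j) = T ∧
      ∀ j, ν (B j) = ENNReal.ofReal (θ j) * ν T := by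
  apply MySplit.partition k T h hT
  rw [← Finset.sum_mul, ← ENNReal.ofReal_sum_of_nonneg (fun i _ => hθ0 i), hθ1,
    ENNReal.ofReal_one, one_mul]

end Split

section Separation

lemma exists_fractional {κ : Type} [Fintype κ] {m : ℕ} (w : κ → Fin (m + 1) → ℝ) (τ : ℝ)
    (hτ : ∀ β : Fin (m + 1) → ℝ, β ∈ stdSimplex ℝ (Fin (m + 1)) →
      τ ≤ ∑ c, ⨆ j, β j * w c j) :
    ∃ θ : κ → Fin (m + 1) → ℝ, (∀ c, θ c ∈ stdSimplex ℝ (Fin (m + 1))) ∧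
      ∀ j, τ ≤ ∑ c, θ c j * w c j := by
  classical
  by_contra hcon
  push_neg at hcon
  set L : (κ → Fin (m + 1) → ℝ) → (Fin (m + 1) → ℝ) := fun θ j => ∑ c, θ c j * w c j with hL
  set Θ : Set (κ → Fin (m + 1) → ℝ) := Set.univ.pi fun _ => stdSimplex ℝ (Fin (m + 1)) with hΘ
  have hΘmem : ∀ θ : κ → Fin (m + 1) → ℝ,
      θ ∈ Θ ↔ ∀ c, θ c ∈ stdSimplex ℝ (Fin (m + 1)) := fun θ => by
    simp [hΘ, Set.mem_univ_pi]
  have hLcont : Continuous L := continuous_pi fun j => continuous_finset_sum _ fun c _ =>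
    by fun_prop
  have hYcomp : IsCompact (L '' Θ) :=
    ((isCompact_univ_pi fun _ => isCompact_stdSimplex ℝ _).image hLcont)
  have hYconv : Convex ℝ (L '' Θ) := by
    rintro y₁ ⟨θ₁, hθ₁, rfl⟩ y₂ ⟨θ₂, hθ₂, rfl⟩ a b ha hb hab
    refine ⟨a • θ₁ + b • θ₂, convex_pi (fun i _ => convex_stdSimplex ℝ _) hθ₁ hθ₂ ha hb hab, ?_⟩
    funext j
    simp only [hL, Pi.add_apply, Pi.smul_apply, smul_eq_mul, add_mul]
    rw [Finset.sum_add_distrib]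
    congr 1 <;> (rw [Finset.mul_sum]; exact Finset.sum_congr rfl fun c _ => by ring)
  set Q : Set (Fin (m + 1) → ℝ) := Set.univ.pi fun _ => Ici τ with hQ
  have hQconv : Convex ℝ Q := convex_pi fun i _ => convex_Ici τ
  have hQclosed : IsClosed Q := isClosed_set_pi fun i _ => isClosed_Ici
  have hdisj : Disjoint (L '' Θ) Q := by
    rw [Set.disjoint_left]
    rintro y ⟨θ, hθ, rfl⟩ hyQ
    obtain ⟨j, hj⟩ := hcon θ ((hΘmem θ).1 hθ)
    exact absurd (Set.mem_univ_pi.mp hyQ j) (not_le.mpr hj)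
  obtain ⟨φ, u, v, hu, huv, hv⟩ :=
    geometric_hahn_banach_compact_closed hYconv hYcomp hQconv hQclosed hdisj
  set e : Fin (m + 1) → (Fin (m + 1) → ℝ) := fun j => fun i => if j = i then 1 else 0 with he
  set β : Fin (m + 1) → ℝ := fun j => φ (e j) with hβ
  have hφeq : ∀ y : Fin (m + 1) → ℝ, φ y = ∑ j, y j * β j := by
    intro y
    have hy : y = ∑ j, y j • e j := pi_eq_sum_univ y
    conv_lhs => rw [hy]
    rw [map_sum]
    exact Finset.sum_congr rfl fun j _ => by rw [_root_.map_smul, smul_eq_mul]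
  have hestd : ∀ j, e j ∈ stdSimplex ℝ (Fin (m + 1)) := by
    intro j
    constructor
    · intro i
      simp only [he]
      split <;> norm_num
    · simp only [he]
      rw [Finset.sum_ite_eq Finset.univ j (fun _ => (1 : ℝ))]
      simp
  have hQτ : (fun _ => τ) ∈ Q := Set.mem_univ_pi.mpr fun i => self_mem_Ici
  have hβnn : ∀ j, 0 ≤ β j := by
    intro j
    by_contra hneg
    push_neg at hneg
    set tt : ℝ := max 0 ((φ (fun _ => τ) - v) / (-β j)) with htt
    have htt0 : (0 : ℝ) ≤ tt := le_max_left _ _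
    have hmem : (fun _ => τ) + tt • e j ∈ Q := by
      rw [Set.mem_univ_pi]
      intro i
      simp only [Pi.add_apply, Pi.smul_apply, smul_eq_mul, he, mem_Ici]
      split <;> nlinarith
    have h1 : v < φ ((fun _ => τ) + tt • e j) := hv _ hmem
    rw [map_add, _root_.map_smul, smul_eq_mul] at h1
    have h2 : (φ (fun _ => τ) - v) / (-β j) ≤ tt := le_max_right _ _
    have h3 : (0 : ℝ) < -β j := by linarith
    rw [div_le_iff₀ h3] at h2
    nlinarith
  have hS : 0 < ∑ j, β j := by
    rcases (Finset.sum_nonneg fun j _ => hβnn j).lt_or_eq with hpos | hzero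
    · exact hpos
    · exfalso
      have hall : ∀ j, β j = 0 := fun j =>
        (Finset.sum_eq_zero_iff_of_nonneg (fun j _ => hβnn j)).1 hzero.symm j (Finset.mem_univ j)
      have hφ0 : ∀ y : Fin (m + 1) → ℝ, φ y = 0 := fun y => by
        rw [hφeq]; simp [hall]
      have h1 : φ (L fun _ => e 0) < u :=
        hu _ ⟨_, (hΘmem _).2 fun c => hestd 0, rfl⟩
      have h2 : v < φ (fun _ => τ) := hv _ hQτ
      rw [hφ0] at h1
      rw [hφ0] at h2
      linarith
  set β' : Fin (m + 1) → ℝ := fun j => β j / (∑ i, β i) with hβ'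
  have hβ'std : β' ∈ stdSimplex ℝ (Fin (m + 1)) :=
    ⟨fun j => div_nonneg (hβnn j) hS.le, by rw [hβ', ← Finset.sum_div, div_self hS.ne']⟩
  have hτβ' := hτ β' hβ'std
  have hjc : ∀ c : κ, ∃ j, (⨆ i, β' i * w c i) = β' j * w c j := fun c =>
    exists_eq_ciSup_of_finite.imp fun j hj => hj.symm
  choose jc hjc using hjc
  have hθsΘ : (fun c => e (jc c)) ∈ Θ := (hΘmem _).2 fun c => hestd _
  have h1 : φ (L fun c => e (jc c)) < u := hu _ ⟨_, hθsΘ, rfl⟩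
  have h2 : v < φ (fun _ => τ) := hv _ hQτ
  have h3 : φ (fun _ => τ) = τ * ∑ j, β j := by
    rw [hφeq, ← Finset.mul_sum]
  have h4 : φ (L fun c => e (jc c)) = ∑ c, β (jc c) * w c (jc c) := by
    rw [hφeq]
    calc ∑ j, (∑ c, e (jc c) j * w c j) * β j
        = ∑ j, ∑ c, e (jc c) j * w c j * β j := by
          exact Finset.sum_congr rfl fun j _ => Finset.sum_mul _ _ _
    _ = ∑ c, ∑ j, e (jc c) j * w c j * β j := Finset.sum_comm
    _ = ∑ c, β (jc c) * w c (jc c) := by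
        refine Finset.sum_congr rfl fun c _ => ?_
        rw [Finset.sum_eq_single (jc c)]
        · simp [he, mul_comm]
        · intro b _ hb
          simp [he, Ne.symm hb]
        · intro hmem
          exact absurd (Finset.mem_univ _) hmem
  have h5 : τ * ∑ j, β j ≤ ∑ c, β (jc c) * w c (jc c) := by
    have heq : ∀ c : κ, β (jc c) * w c (jc c) = (∑ i, β i) * (β' (jc c) * w c (jc c)) := by
      intro c
      rw [hβ']
      field_simp
    rw [Finset.sum_congr rfl fun c _ => heq c, ← Finset.mul_sum, mul_comm τ _]
    refine mul_le_mul_of_nonneg_left ?_ hS.le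
    calc τ ≤ ∑ c, ⨆ i, β' i * w c i := hτβ'
    _ = ∑ c, β' (jc c) * w c (jc c) := Finset.sum_congr rfl fun c _ => hjc c
  linarith

end Separation

section Dyadic
variable {C : Type} [MeasurableSpace C]

lemma exists_dyadic_approx (ν : Measure C) [IsFiniteMeasure ν]
    {f : C → ℝ} (hmeas : Measurable f) (hnn : ∀ x, 0 ≤ f x) (hint : Integrable f ν)
    {δ : ℝ} (hδ : 0 < δ) :
    ∃ φ : C → ℝ, Measurable φ ∧ (∀ x, 0 ≤ φ x) ∧ (∀ x, φ x ≤ f x) ∧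
      (Set.range φ).Finite ∧ ∫ x, f x ∂ν - ∫ x, φ x ∂ν ≤ δ := by
  set F : ℕ → C → ℝ := fun n x => min ((⌊f x * 2 ^ n⌋₊ : ℝ) / 2 ^ n) n with hF
  have hpow : ∀ n : ℕ, (0 : ℝ) < 2 ^ n := fun n => by positivity
  have hFmeas : ∀ n, Measurable (F n) := fun n =>
    ((measurable_from_nat.comp ((hmeas.mul_const _).nat_floor)).div_const _).min
      measurable_const
  have hFnn : ∀ n x, 0 ≤ F n x := fun n x =>
    le_min (by positivity) (Nat.cast_nonneg n)
  have hFle : ∀ n x, F n x ≤ f x := by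
    intro n x
    refine (min_le_left _ _).trans ?_
    rw [div_le_iff₀ (hpow n)]
    exact Nat.floor_le (mul_nonneg (hnn x) (hpow n).le)
  have hFfin : ∀ n, (Set.range (F n)).Finite := by
    intro n
    apply Set.Finite.subset
      (Set.Finite.image (fun k : ℕ => min ((k : ℝ) / 2 ^ n) n) (Set.finite_Iic (n * 2 ^ n)))
    rintro y ⟨x, rfl⟩
    by_cases hk : ⌊f x * 2 ^ n⌋₊ ≤ n * 2 ^ n
    · exact ⟨⌊f x * 2 ^ n⌋₊, Set.mem_Iic.mpr hk, rfl⟩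
    · push_neg at hk
      refine ⟨n * 2 ^ n, Set.mem_Iic.mpr le_rfl, ?_⟩
      have hcast : ((n * 2 ^ n : ℕ) : ℝ) = (n : ℝ) * 2 ^ n := by push_cast; ring
      have h1 : min (((n * 2 ^ n : ℕ) : ℝ) / 2 ^ n) (n : ℝ) = (n : ℝ) := by
        rw [hcast, mul_div_assoc, div_self (hpow n).ne', mul_one, min_self]
      have h2 : F n x = (n : ℝ) := by
        rw [hF]
        apply min_eq_right
        rw [le_div_iff₀ (hpow n)]
        calc (n : ℝ) * 2 ^ n = ((n * 2 ^ n : ℕ) : ℝ) := hcast.symm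
        _ ≤ (⌊f x * 2 ^ n⌋₊ : ℝ) := by exact_mod_cast hk.le
      rw [h2]; exact h1
  have hFtend : ∀ x, Tendsto (fun n => F n x) atTop (𝓝 (f x)) := by
    intro x
    have hlb : ∀ᶠ n in atTop, f x - (2⁻¹ : ℝ) ^ n ≤ F n x := by
      filter_upwards [eventually_ge_atTop ⌈f x⌉₊] with n hn
      have hnf : f x ≤ (n : ℝ) := (Nat.le_ceil (f x)).trans (by exact_mod_cast hn)
      have hinv : (0 : ℝ) < 2⁻¹ ^ n := by positivity
      refine le_min ?_ (by linarith)
      have hexp : (2⁻¹ : ℝ) ^ n * 2 ^ n = 1 := by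
        rw [inv_pow, inv_mul_cancel₀ (hpow n).ne']
      have hfl := Nat.lt_floor_add_one (f x * 2 ^ n)
      rw [le_div_iff₀ (hpow n), sub_mul, hexp]
      linarith
    have hlim : Tendsto (fun n : ℕ => f x - (2⁻¹ : ℝ) ^ n) atTop (𝓝 (f x)) := by
      have := tendsto_pow_atTop_nhds_zero_of_lt_one (by norm_num : (0:ℝ) ≤ 2⁻¹)
        (by norm_num : (2⁻¹ : ℝ) < 1)
      simpa using tendsto_const_nhds.sub this
    exact tendsto_of_tendsto_of_tendsto_of_le_of_le' hlim tendsto_const_nhds hlb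
      (Eventually.of_forall fun n => hFle n x)
  have hnorm : ∀ n, ∀ᵐ x ∂ν, ‖F n x‖ ≤ f x := fun n =>
    Eventually.of_forall fun x => by
      rw [Real.norm_eq_abs, abs_of_nonneg (hFnn n x)]; exact hFle n x
  have htendI : Tendsto (fun n => ∫ x, F n x ∂ν) atTop (𝓝 (∫ x, f x ∂ν)) :=
    tendsto_integral_of_dominated_convergence f
      (fun n => (hFmeas n).aestronglyMeasurable) hint hnorm
      (Eventually.of_forall hFtend)
  have hev : ∀ᶠ n in atTop, ∫ x, f x ∂ν - δ ≤ ∫ x, F n x ∂ν :=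
    htendI.eventually (eventually_ge_nhds (by linarith))
  obtain ⟨n, hn⟩ := hev.exists
  exact ⟨F n, hFmeas n, hFnn n, hFle n, hFfin n, by linarith⟩

end Dyadic

section SupHelpers
variable {C : Type} [MeasurableSpace C] {ν : Measure C}

lemma measurable_finset_sup' {ι : Type} {s : Finset ι} (hs : s.Nonempty) {g : ι → C → ℝ}
    (hg : ∀ i, Measurable (g i)) : Measurable fun x => s.sup' hs fun i => g i x := by
  induction hs using Finset.Nonempty.cons_induction with
  | singleton a => simpa using hg a
  | cons a s ha hs ih =>
    have heq : (fun x => (Finset.cons a s ha).sup' (Finset.cons_nonempty ha) fun i => g i x) =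
        fun x => max (g a x) (s.sup' hs fun i => g i x) := by
      funext x
      rw [Finset.sup'_cons]
    rw [heq]
    exact (hg a).max ih

lemma measurable_fin_sup {m : ℕ} {g : Fin (m + 1) → C → ℝ} (hg : ∀ j, Measurable (g j)) :
    Measurable fun x => ⨆ j, g j x := by
  have heq : (fun x => ⨆ j, g j x) =
      fun x => Finset.univ.sup' Finset.univ_nonempty (fun j => g j x) := by
    funext x
    rw [Finset.sup'_univ_eq_ciSup]
  rw [heq]
  exact measurable_finset_sup' _ hg

lemma integrable_fin_sup {m : ℕ} {g : Fin (m + 1) → C → ℝ} [IsFiniteMeasure ν]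
    (hgmeas : ∀ j, Measurable (g j)) (hgnn : ∀ j x, 0 ≤ g j x)
    (hgint : ∀ j, Integrable (g j) ν) :
    Integrable (fun x => ⨆ j, g j x) ν := by
  refine Integrable.mono' (integrable_finset_sum Finset.univ fun j (_ : j ∈ Finset.univ) => hgint j)
    (measurable_fin_sup hgmeas).aestronglyMeasurable (Eventually.of_forall fun x => ?_)
  have hnn : 0 ≤ ⨆ j, g j x :=
    le_ciSup_of_le (Set.Finite.bddAbove (Set.finite_range _)) 0 (hgnn 0 x)
  rw [Real.norm_eq_abs, abs_of_nonneg hnn]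
  exact ciSup_le fun j => Finset.single_le_sum (fun i _ => hgnn i x) (Finset.mem_univ j)

end SupHelpers

/-- If each `μ j` is nonatomic, the maxmin value equals the minimum
of `g` over the simplex:
`sup_A min_j μ j (A j) = inf_{α ∈ Δ} ∫ max_j (α j * f j x) dν`. -/
theorem maxmin_eq_inf_g
    {C : Type} [MeasurableSpace C] {m : ℕ}
    (ν : Measure C) [IsFiniteMeasure ν]
    (μ : Fin m → Measure C) [∀ j, IsFiniteMeasure (μ j)]
    (f : Fin m → C → ℝ)
    (hf_meas : ∀ j, Measurable (f j))
    (hf_nonneg : ∀ j x, 0 ≤ f j x)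
    (hf_int : ∀ j, Integrable (f j) ν)
    (hdens : ∀ j (A : Set C), MeasurableSet A → (μ j A).toReal = ∫ x in A, f j x ∂ν)
    (hna : ∀ j (A : Set C), MeasurableSet A → 0 < μ j A →
      ∃ B, MeasurableSet B ∧ B ⊆ A ∧ 0 < μ j B ∧ 0 < μ j (A \ B)) :
    sSup {r : ℝ | ∃ A : Fin m → Set C, (∀ i, MeasurableSet (A i)) ∧
          (∀ i j, i ≠ j → Disjoint (A i) (A j)) ∧ (⋃ i, A i) = Set.univ ∧
          r = ⨅ j, (μ j (A j)).toReal} =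
      sInf {r : ℝ | ∃ α : Fin m → ℝ, (∀ j, 0 ≤ α j) ∧ (∑ j, α j = 1) ∧
          r = ∫ x, (⨆ j, α j * f j x) ∂ν} := by
  classical
  cases m with
  | zero =>
    have hS2 : {r : ℝ | ∃ α : Fin 0 → ℝ, (∀ j, 0 ≤ α j) ∧ (∑ j, α j = 1) ∧
        r = ∫ x, (⨆ j, α j * f j x) ∂ν} = ∅ := by
      ext r
      simp only [Set.mem_setOf_eq, Set.mem_empty_iff_false, iff_false, not_exists]
      rintro α ⟨_, hsum, _⟩
      simp at hsum
    rw [hS2, Real.sInf_empty]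
    by_cases hC : Nonempty C
    · have hS1 : {r : ℝ | ∃ A : Fin 0 → Set C, (∀ i, MeasurableSet (A i)) ∧
          (∀ i j, i ≠ j → Disjoint (A i) (A j)) ∧ (⋃ i, A i) = Set.univ ∧
          r = ⨅ j, (μ j (A j)).toReal} = ∅ := by
        ext r
        simp only [Set.mem_setOf_eq, Set.mem_empty_iff_false, iff_false, not_exists]
        rintro A ⟨_, _, hcov, _⟩
        rw [Set.iUnion_of_empty] at hcov
        exact (Set.univ_eq_empty_iff.mp hcov.symm).false hC.some
      rw [hS1, Real.sSup_empty]
    · have hCempty : IsEmpty C := not_nonempty_iff.mp hC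
      have hS1 : {r : ℝ | ∃ A : Fin 0 → Set C, (∀ i, MeasurableSet (A i)) ∧
          (∀ i j, i ≠ j → Disjoint (A i) (A j)) ∧ (⋃ i, A i) = Set.univ ∧
          r = ⨅ j, (μ j (A j)).toReal} = {0} := by
        ext r
        simp only [Set.mem_setOf_eq, Set.mem_singleton_iff]
        constructor
        · rintro ⟨A, _, _, _, hr⟩
          rw [hr]
          exact Real.iInf_of_isEmpty _
        · rintro rfl
          refine ⟨fun _ => ∅, fun i => i.elim0, fun i => i.elim0, ?_,
            (Real.iInf_of_isEmpty _).symm⟩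
          rw [Set.iUnion_of_empty]
          exact (Set.univ_eq_empty_iff.mpr hCempty).symm
      rw [hS1, csSup_singleton]
  | succ m' =>
    set S1 := {r : ℝ | ∃ A : Fin (m' + 1) → Set C, (∀ i, MeasurableSet (A i)) ∧
        (∀ i j, i ≠ j → Disjoint (A i) (A j)) ∧ (⋃ i, A i) = Set.univ ∧
        r = ⨅ j, (μ j (A j)).toReal} with hS1def
    set S2 := {r : ℝ | ∃ α : Fin (m' + 1) → ℝ, (∀ j, 0 ≤ α j) ∧ (∑ j, α j = 1) ∧
        r = ∫ x, (⨆ j, α j * f j x) ∂ν} with hS2def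
    have hsupint : ∀ (g : Fin (m' + 1) → C → ℝ) (β : Fin (m' + 1) → ℝ), (∀ j, 0 ≤ β j) →
        (∀ j, Measurable (g j)) → (∀ j x, 0 ≤ g j x) → (∀ j, Integrable (g j) ν) →
        Integrable (fun x => ⨆ j, β j * g j x) ν := fun g β hβ hgm hgnn hgint =>
      integrable_fin_sup (fun j => (hgm j).const_mul (β j))
        (fun j x => mul_nonneg (hβ j) (hgnn j x)) (fun j => (hgint j).const_mul (β j))
    have hS2ne : S2.Nonempty := by
      refine ⟨_, fun _ => (1 : ℝ) / (m' + 1), fun j => by positivity, ?_, rfl⟩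
      rw [Finset.sum_const, Finset.card_univ, Fintype.card_fin, nsmul_eq_mul]
      push_cast
      field_simp
    have hS2lb : ∀ s ∈ S2, (0 : ℝ) ≤ s := by
      rintro s ⟨α, hα, hα1, rfl⟩
      refine integral_nonneg fun x => ?_
      exact le_ciSup_of_le (Set.Finite.bddAbove (Set.finite_range _)) 0
        (mul_nonneg (hα 0) (hf_nonneg 0 x))
    have hS2bdd : BddBelow S2 := ⟨0, hS2lb⟩
    have weak : ∀ r ∈ S1, ∀ s ∈ S2, r ≤ s := by
      rintro r ⟨A, hAm, hAd, hAu, rfl⟩ s ⟨α, hα, hα1, rfl⟩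
      have hint_sup : Integrable (fun x => ⨆ j, α j * f j x) ν :=
        hsupint f α hα hf_meas hf_nonneg hf_int
      have h1 : ∀ j, (⨅ i, (μ i (A i)).toReal) ≤ (μ j (A j)).toReal := fun j =>
        ciInf_le (Set.Finite.bddBelow (Set.finite_range fun i => (μ i (A i)).toReal)) j
      have h2 : (⨅ i, (μ i (A i)).toReal) = ∑ j, α j * ⨅ i, (μ i (A i)).toReal := by
        rw [← Finset.sum_mul, hα1, one_mul]
      rw [h2]
      calc ∑ j, α j * ⨅ i, (μ i (A i)).toReal ≤ ∑ j, α j * (μ j (A j)).toReal :=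
        Finset.sum_le_sum fun j _ => mul_le_mul_of_nonneg_left (h1 j) (hα j)
      _ = ∑ j, ∫ x in A j, α j * f j x ∂ν := by
          refine Finset.sum_congr rfl fun j _ => ?_
          rw [hdens j (A j) (hAm j), ← integral_const_mul]
      _ ≤ ∑ j, ∫ x in A j, (⨆ i, α i * f i x) ∂ν := by
          refine Finset.sum_le_sum fun j _ => ?_
          refine setIntegral_mono_on (((hf_int j).const_mul (α j)).integrableOn)
            (hint_sup.integrableOn) (hAm j) fun x _ => ?_
          exact le_ciSup (Set.Finite.bddAbove (Set.finite_range fun i => α i * f i x)) j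
      _ = ∫ x in ⋃ j ∈ Finset.univ, A j, (⨆ i, α i * f i x) ∂ν := by
          rw [integral_biUnion_finset Finset.univ (fun i _ => hAm i)
            (fun i _ j _ hij => hAd i j hij) (fun i _ => hint_sup.integrableOn)]
      _ = ∫ x, (⨆ i, α i * f i x) ∂ν := by
          have huniv : (⋃ j ∈ Finset.univ, A j) = (Set.univ : Set C) := by
            rw [← hAu]; simp
          rw [huniv, Measure.restrict_univ]
    have hS1ne : S1.Nonempty := by
      refine ⟨_, fun i => if i = 0 then Set.univ else ∅, fun i => ?_, ?_, ?_, rfl⟩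
      · by_cases h : i = 0 <;> simp [h]
      · intro i j hij
        by_cases h1 : i = 0 <;> by_cases h2 : j = 0
        · exact absurd (h1.trans h2.symm) hij
        · simp [h1, h2]
        · simp [h1, h2]
        · simp [h1, h2]
      · apply Set.eq_univ_of_forall
        intro x
        exact Set.mem_iUnion.mpr ⟨0, by simp⟩
    have hS1bdd : BddAbove S1 := ⟨hS2ne.choose, fun r hr => weak r hr _ hS2ne.choose_spec⟩
    refine le_antisymm (csSup_le hS1ne fun r hr => le_csInf hS2ne fun s hs => weak r hr s hs) ?_
    refine le_of_forall_pos_le_add fun ε hε => ?_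
    -- dyadic approximations of the densities
    have happrox : ∀ j : Fin (m' + 1), ∃ φ : C → ℝ, Measurable φ ∧ (∀ x, 0 ≤ φ x) ∧
        (∀ x, φ x ≤ f j x) ∧ (Set.range φ).Finite ∧
        ∫ x, f j x ∂ν - ∫ x, φ x ∂ν ≤ ε / (m' + 1) := fun j =>
      exists_dyadic_approx ν (hf_meas j) (hf_nonneg j) (hf_int j) (by positivity)
    choose φ hφmeas hφnn hφle hφfin hφgap using happrox
    have hφint : ∀ j, Integrable (φ j) ν := fun j => (hf_int j).mono'
      (hφmeas j).aestronglyMeasurable (Eventually.of_forall fun x => by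
        rw [Real.norm_eq_abs, abs_of_nonneg (hφnn j x)]; exact hφle j x)
    set Φ : C → (Fin (m' + 1) → ℝ) := fun x j => φ j x with hΦdef
    have hΦmeas : Measurable Φ := measurable_pi_lambda _ fun j => hφmeas j
    have hΦfin : (Set.range Φ).Finite := by
      refine Set.Finite.subset (Set.Finite.pi fun j => hφfin j) ?_
      rintro y ⟨x, rfl⟩
      exact fun j _ => ⟨x, rfl⟩
    set D : Finset (Fin (m' + 1) → ℝ) := hΦfin.toFinset with hDdef
    have hmemD : ∀ x, Φ x ∈ D := fun x => by
      rw [hDdef, Set.Finite.mem_toFinset]; exact ⟨x, rfl⟩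
    have hcellmeas : ∀ v : Fin (m' + 1) → ℝ, MeasurableSet (Φ ⁻¹' {v}) := fun v =>
      hΦmeas (measurableSet_singleton v)
    have hcellval : ∀ (v : Fin (m' + 1) → ℝ), ∀ x ∈ Φ ⁻¹' {v}, ∀ j, φ j x = v j :=
      fun v x hx j => congrFun (Set.mem_singleton_iff.mp hx) j
    have hcellnn : ∀ v ∈ D, ∀ j, (0:ℝ) ≤ v j := by
      intro v hv j
      rw [hDdef, Set.Finite.mem_toFinset] at hv
      obtain ⟨x, rfl⟩ := hv
      exact hφnn j x
    have hcelldisj : ∀ v v' : Fin (m' + 1) → ℝ, v ≠ v' →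
        Disjoint (Φ ⁻¹' {v}) (Φ ⁻¹' {v'}) := by
      intro v v' hne
      rw [Set.disjoint_left]
      intro x hx hx'
      exact hne ((Set.mem_singleton_iff.mp hx).symm.trans (Set.mem_singleton_iff.mp hx'))
    -- the key inequality for the finite problem
    have hkey : ∀ β : Fin (m' + 1) → ℝ, β ∈ stdSimplex ℝ (Fin (m' + 1)) →
        sInf S2 - ε ≤ ∑ c : {v // v ∈ D}, ⨆ j,
          β j * (c.1 j * (ν (Φ ⁻¹' {c.1})).toReal) := by
      intro β hβ
      have hβnn : ∀ j, 0 ≤ β j := hβ.1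
      have hβ1 : ∑ j, β j = 1 := hβ.2
      have hβle1 : ∀ j, β j ≤ 1 := fun j => by
        rw [← hβ1]
        exact Finset.single_le_sum (fun i _ => hβnn i) (Finset.mem_univ j)
      have hintf : Integrable (fun x => ⨆ j, β j * f j x) ν :=
        hsupint f β hβnn hf_meas hf_nonneg hf_int
      have hintφ : Integrable (fun x => ⨆ j, β j * φ j x) ν :=
        hsupint φ β hβnn hφmeas hφnn hφint
      have h0 : sInf S2 ≤ ∫ x, (⨆ j, β j * f j x) ∂ν := csInf_le hS2bdd ⟨β, hβnn, hβ1, rfl⟩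
      have hpt : ∀ x, (⨆ j, β j * f j x) ≤ (⨆ j, β j * φ j x) + ∑ j, (f j x - φ j x) := by
        intro x
        refine ciSup_le fun j => ?_
        have e2 : β j * φ j x ≤ ⨆ i, β i * φ i x :=
          le_ciSup (Set.Finite.bddAbove (Set.finite_range fun i => β i * φ i x)) j
        have e3 : β j * (f j x - φ j x) ≤ f j x - φ j x :=
          mul_le_of_le_one_left (sub_nonneg.mpr (hφle j x)) (hβle1 j)
        have e4 : f j x - φ j x ≤ ∑ i, (f i x - φ i x) :=
          Finset.single_le_sum (fun i _ => sub_nonneg.mpr (hφle i x)) (Finset.mem_univ j)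
        nlinarith [e2, e3, e4]
      have hgapint : Integrable (fun x => ∑ j, (f j x - φ j x)) ν :=
        integrable_finset_sum _ fun j _ => (hf_int j).sub (hφint j)
      have hint1 : ∫ x, (⨆ j, β j * f j x) ∂ν ≤ ∫ x, (⨆ j, β j * φ j x) ∂ν + ε := by
        have hstep : ∫ x, (⨆ j, β j * f j x) ∂ν ≤
            ∫ x, ((⨆ j, β j * φ j x) + ∑ j, (f j x - φ j x)) ∂ν :=
          integral_mono hintf (hintφ.add hgapint) hpt
        have hsplit2 : ∫ x, ((⨆ j, β j * φ j x) + ∑ j, (f j x - φ j x)) ∂ν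
            = ∫ x, (⨆ j, β j * φ j x) ∂ν + ∑ j, ∫ x, (f j x - φ j x) ∂ν := by
          rw [integral_add hintφ hgapint]
          congr 1
          exact integral_finset_sum _ (fun j (_ : j ∈ Finset.univ) => (hf_int j).sub (hφint j))
        rw [hsplit2] at hstep
        have hsum : ∑ j : Fin (m' + 1), ∫ x, (f j x - φ j x) ∂ν ≤ ε := by
          have h1 : ∀ j : Fin (m' + 1), ∫ x, (f j x - φ j x) ∂ν ≤ ε / (m' + 1) := fun j => by
            rw [integral_sub (hf_int j) (hφint j)]
            exact hφgap j
          calc ∑ j : Fin (m' + 1), ∫ x, (f j x - φ j x) ∂ν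
              ≤ ∑ _j : Fin (m' + 1), ε / (m' + 1) := Finset.sum_le_sum fun j _ => h1 j
          _ = ε := by
            rw [Finset.sum_const, Finset.card_univ, Fintype.card_fin, nsmul_eq_mul]
            push_cast
            field_simp
        linarith
      have hcover : (⋃ v ∈ D, Φ ⁻¹' {v}) = (Set.univ : Set C) := by
        apply Set.eq_univ_of_forall
        intro x
        exact Set.mem_biUnion (hmemD x) rfl
      have hpair : (↑D : Set (Fin (m' + 1) → ℝ)).Pairwise
          (Function.onFun Disjoint fun v => Φ ⁻¹' {v}) := fun v _ v' _ hne => hcelldisj v v' hne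
      have hsplitI : ∫ x, (⨆ j, β j * φ j x) ∂ν
          = ∑ v ∈ D, ∫ x in Φ ⁻¹' {v}, (⨆ j, β j * φ j x) ∂ν := by
        have hbi := integral_biUnion_finset (μ := ν) (f := fun x => ⨆ j, β j * φ j x) D
          (fun v _ => hcellmeas v) hpair (fun v _ => hintφ.integrableOn)
        rw [hcover, Measure.restrict_univ] at hbi
        simpa using hbi
      have hcellint : ∀ v ∈ D, ∫ x in Φ ⁻¹' {v}, (⨆ j, β j * φ j x) ∂ν
          = ⨆ j, β j * (v j * (ν (Φ ⁻¹' {v})).toReal) := by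
        intro v hv
        have hEq : Set.EqOn (fun x => ⨆ j, β j * φ j x) (fun _ => ⨆ j, β j * v j)
            (Φ ⁻¹' {v}) := by
          intro x hx
          have hfe : (fun j => β j * φ j x) = fun j => β j * v j :=
            funext fun j => by rw [hcellval v x hx j]
          simp only [hfe]
        rw [setIntegral_congr_fun (hcellmeas v) hEq, setIntegral_const, smul_eq_mul, measureReal_def,
          mul_comm ((ν (Φ ⁻¹' {v})).toReal) _]
        have hnn : (0:ℝ) ≤ (ν (Φ ⁻¹' {v})).toReal := ENNReal.toReal_nonneg
        rw [← Finset.sup'_univ_eq_ciSup, ← Finset.sup'_univ_eq_ciSup,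
          Finset.comp_sup'_eq_sup'_comp (g := fun y : ℝ => y * (ν (Φ ⁻¹' {v})).toReal) _
            (fun x y => max_mul_of_nonneg x y hnn)]
        congr 1
        funext j
        simp only [Function.comp_apply]
        ring
      calc sInf S2 - ε ≤ ∫ x, (⨆ j, β j * φ j x) ∂ν := by linarith
      _ = ∑ v ∈ D, ∫ x in Φ ⁻¹' {v}, (⨆ j, β j * φ j x) ∂ν := hsplitI
      _ = ∑ v ∈ D, ⨆ j, β j * (v j * (ν (Φ ⁻¹' {v})).toReal) :=
          Finset.sum_congr rfl hcellint
      _ = ∑ c : {v // v ∈ D}, ⨆ j, β j * (c.1 j * (ν (Φ ⁻¹' {c.1})).toReal) :=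
          (Finset.sum_coe_sort D fun v => ⨆ j, β j * (v j * (ν (Φ ⁻¹' {v})).toReal)).symm
    obtain ⟨θ, hθstd, hθval⟩ := exists_fractional (κ := {v // v ∈ D})
      (fun c j => c.1 j * (ν (Φ ⁻¹' {c.1})).toReal) (sInf S2 - ε) hkey
    -- split every cell according to θ
    have hcellpart : ∀ c : {v // v ∈ D}, ∃ B : Fin (m' + 1) → Set C,
        (∀ j, MeasurableSet (B j)) ∧ (∀ i j, i ≠ j → Disjoint (B i) (B j)) ∧
        (⋃ j, B j) = Φ ⁻¹' {c.1} ∧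
        ∀ j, θ c j * (c.1 j * (ν (Φ ⁻¹' {c.1})).toReal) ≤ c.1 j * (ν (B j)).toReal := by
      rintro ⟨v, hv⟩
      by_cases hz : ∀ j, v j = 0
      · refine ⟨fun i => if i = 0 then Φ ⁻¹' {v} else ∅, fun i => ?_, ?_, ?_, fun j => by
          simp [hz j]⟩
        · by_cases h : i = 0 <;> simp [h, hcellmeas v]
        · intro i j hij
          by_cases h1 : i = 0 <;> by_cases h2 : j = 0
          · exact absurd (h1.trans h2.symm) hij
          · simp [h1, h2]
          · simp [h1, h2]
          · simp [h1, h2]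
        · apply subset_antisymm
          · refine Set.iUnion_subset fun i => ?_
            by_cases h : i = 0 <;> simp [h]
          · intro x hx
            exact Set.mem_iUnion.mpr ⟨0, by simpa using hx⟩
      · push_neg at hz
        obtain ⟨j₀, hj₀⟩ := hz
        have hj₀pos : 0 < v j₀ := lt_of_le_of_ne (hcellnn v hv j₀) (Ne.symm hj₀)
        have hνzero : ∀ (E : Set C), MeasurableSet E → ν E = 0 → μ j₀ E = 0 := by
          intro E hEm hE0
          have htr : (μ j₀ E).toReal = 0 := by
            rw [hdens j₀ E hEm]
            have : ν.restrict E = 0 := by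
              rw [Measure.restrict_eq_zero]; exact hE0
            rw [this, integral_zero_measure]
          rcases (ENNReal.toReal_eq_zero_iff _).1 htr with h | h
          · exact h
          · exact absurd h (measure_ne_top _ _)
        have hsplit : MySplit ν (Φ ⁻¹' {v}) := by
          intro A hAm hAsub hpos
          have hνA : 0 < (ν A).toReal := ENNReal.toReal_pos hpos.ne' (measure_ne_top ν A)
          have hlow : v j₀ * (ν A).toReal ≤ (μ j₀ A).toReal := by
            rw [hdens j₀ A hAm]
            calc v j₀ * (ν A).toReal = ∫ _x in A, v j₀ ∂ν := by
                  rw [setIntegral_const, smul_eq_mul, measureReal_def, mul_comm]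
            _ ≤ ∫ x in A, f j₀ x ∂ν := by
                refine setIntegral_mono_on
                  (integrableOn_const (measure_ne_top ν A))
                  ((hf_int j₀).integrableOn) hAm fun x hx => ?_
                rw [← hcellval v x (hAsub hx) j₀]
                exact hφle j₀ x
          have hμpos : 0 < μ j₀ A := by
            rcases (zero_le : 0 ≤ μ j₀ A).lt_or_eq with h | h
            · exact h
            · exfalso
              rw [← h] at hlow
              simp only [ENNReal.toReal_zero] at hlow
              nlinarith
          obtain ⟨B, hBm, hBA, hB1, hB2⟩ := hna j₀ A hAm hμpos
          refine ⟨B, hBm, hBA, ?_, ?_⟩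
          · rcases (zero_le : 0 ≤ ν B).lt_or_eq with h | h
            · exact h
            · exact absurd (hνzero B hBm h.symm) hB1.ne'
          · rcases (zero_le : 0 ≤ ν (A \ B)).lt_or_eq with h | h
            · exact h
            · exact absurd (hνzero _ (hAm.diff hBm) h.symm) hB2.ne'
        obtain ⟨B, h1, h2, h3, h4⟩ := hsplit.partition_real (hcellmeas v) (θ ⟨v, hv⟩)
          (fun j => (hθstd ⟨v, hv⟩).1 j) ((hθstd ⟨v, hv⟩).2)
        refine ⟨B, h1, h2, h3, fun j => ?_⟩
        rw [h4 j, ENNReal.toReal_mul, ENNReal.toReal_ofReal ((hθstd ⟨v, hv⟩).1 j)]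
        exact le_of_eq (by ring)
    choose P hPmeas hPdisj hPcover hPval using hcellpart
    have hPsub : ∀ (c : {v // v ∈ D}) j, P c j ⊆ Φ ⁻¹' {c.1} := fun c j =>
      (hPcover c) ▸ Set.subset_iUnion (P c) j
    have hAmeas : ∀ j, MeasurableSet (⋃ c : {v // v ∈ D}, P c j) := fun j =>
      MeasurableSet.iUnion fun c => hPmeas c j
    have hAdisj : ∀ i j, i ≠ j →
        Disjoint (⋃ c : {v // v ∈ D}, P c i) (⋃ c : {v // v ∈ D}, P c j) := by
      intro i j hij
      rw [Set.disjoint_iUnion_left]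
      intro c
      rw [Set.disjoint_iUnion_right]
      intro c'
      by_cases hcc : c = c'
      · subst hcc
        exact hPdisj c i j hij
      · have hvv : c.1 ≠ c'.1 := fun h => hcc (Subtype.ext h)
        exact Set.disjoint_of_subset (hPsub c i) (hPsub c' j) (hcelldisj _ _ hvv)
    have hAcover : (⋃ j, ⋃ c : {v // v ∈ D}, P c j) = (Set.univ : Set C) := by
      apply Set.eq_univ_of_forall
      intro x
      have hx : x ∈ ⋃ j, P ⟨Φ x, hmemD x⟩ j := by
        rw [hPcover]
        exact rfl
      obtain ⟨j, hj⟩ := Set.mem_iUnion.1 hx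
      exact Set.mem_iUnion.2 ⟨j, Set.mem_iUnion.2 ⟨⟨Φ x, hmemD x⟩, hj⟩⟩
    have hval : ∀ j, sInf S2 - ε ≤ (μ j (⋃ c : {v // v ∈ D}, P c j)).toReal := by
      intro j
      rw [hdens j _ (hAmeas j)]
      have hpair' : ((Finset.univ : Finset {v // v ∈ D}) : Set {v // v ∈ D}).Pairwise
          (Function.onFun Disjoint fun c => P c j) := by
        intro c _ c' _ hcc
        have hvv : c.1 ≠ c'.1 := fun h => hcc (Subtype.ext h)
        exact Set.disjoint_of_subset (hPsub c j) (hPsub c' j) (hcelldisj _ _ hvv)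
      have hAeq : (⋃ c : {v // v ∈ D}, P c j) = ⋃ c ∈ (Finset.univ : Finset {v // v ∈ D}), P c j := by
        simp
      have h2 : ∫ x in (⋃ c : {v // v ∈ D}, P c j), φ j x ∂ν
          = ∑ c : {v // v ∈ D}, ∫ x in P c j, φ j x ∂ν := by
        rw [hAeq, integral_biUnion_finset Finset.univ (fun c _ => hPmeas c j) hpair'
          (fun c _ => (hφint j).integrableOn)]
      have h3 : ∀ c : {v // v ∈ D}, ∫ x in P c j, φ j x ∂ν = c.1 j * (ν (P c j)).toReal := by
        intro c
        rw [setIntegral_congr_fun (hPmeas c j)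
          (g := fun _ => c.1 j) (fun x hx => hcellval c.1 x (hPsub c j hx) j),
          setIntegral_const, smul_eq_mul, measureReal_def, mul_comm]
      have h1 : ∫ x in (⋃ c : {v // v ∈ D}, P c j), φ j x ∂ν
          ≤ ∫ x in (⋃ c : {v // v ∈ D}, P c j), f j x ∂ν :=
        setIntegral_mono_on ((hφint j).integrableOn) ((hf_int j).integrableOn)
          (hAmeas j) fun x _ => hφle j x
      calc sInf S2 - ε
          ≤ ∑ c : {v // v ∈ D}, θ c j * (c.1 j * (ν (Φ ⁻¹' {c.1})).toReal) := hθval j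
      _ ≤ ∑ c : {v // v ∈ D}, c.1 j * (ν (P c j)).toReal :=
          Finset.sum_le_sum fun c _ => hPval c j
      _ = ∑ c : {v // v ∈ D}, ∫ x in P c j, φ j x ∂ν :=
          Finset.sum_congr rfl fun c _ => (h3 c).symm
      _ = ∫ x in (⋃ c : {v // v ∈ D}, P c j), φ j x ∂ν := h2.symm
      _ ≤ ∫ x in (⋃ c : {v // v ∈ D}, P c j), f j x ∂ν := h1
    have hrS1 : (⨅ j, (μ j (⋃ c : {v // v ∈ D}, P c j)).toReal) ∈ S1 :=
      ⟨fun j => ⋃ c : {v // v ∈ D}, P c j, hAmeas, hAdisj, hAcover, rfl⟩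
    have hrge : sInf S2 - ε ≤ ⨅ j, (μ j (⋃ c : {v // v ∈ D}, P c j)).toReal :=
      le_ciInf hval
    have hfin : sInf S2 - ε ≤ sSup S1 := hrge.trans (le_csSup hS1bdd hrS1)
    linarith
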